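/- Let τ be a correct compositional translation to LOCKSIMPLE_{k,IS}, k ≥ 2. If τ(!) has blocking type P_i (solo execution deadlocks at the first P_i, with no earlier P_i or T_i), then the initial store satisfies IS_i = full. If τ(!) has blocking type P_i P_i, then either the first symbol of τ(!) mentioning lock i is T_i, or IS_i = empty. The same statements hold for τ(?). -/

import Mathlib

/-- Symbols of SYNCSIMPLE: `!` (bang) and `?` (ques). -/
inductive SSym | bang | ques
deriving DecidableEq

/-- A SYNCSIMPLE subprocess: a string over {!,?} ending with `0` (false) or `✓` (true). -/
abbrev SSub := List SSym × Bool

/-- A SYNCSIMPLE process: a multiset of subprocesses. -/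
abbrev SProc := Multiset SSub

/-- The SYS reduction: a leading `!` and a leading `?` of two subprocesses are consumed. -/
def SysStep (P Q : SProc) : Prop :=
  ∃ (u1 u2 : List SSym) (b1 b2 : Bool) (R : SProc),
    P = (SSym.bang :: u1, b1) ::ₘ (SSym.ques :: u2, b2) ::ₘ R ∧
    Q = (u1, b1) ::ₘ (u2, b2) ::ₘ R

/-- A process is successful if it contains the subprocess `✓`. -/
def SSuccessful (P : SProc) : Prop := (([], true) : SSub) ∈ P

def SMayConv (P : SProc) : Prop :=
  ∃ Q, Relation.ReflTransGen SysStep P Q ∧ SSuccessful Q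

def SMustConv (P : SProc) : Prop :=
  ∀ Q, Relation.ReflTransGen SysStep P Q → SMayConv Q

/-- Lock operations: put `P_i` and take `T_i`. -/
inductive LOp | put | take
deriving DecidableEq

abbrev LSym (k : ℕ) := LOp × Fin k
abbrev LSub (k : ℕ) := List (LSym k) × Bool
abbrev LProc (k : ℕ) := Multiset (LSub k)
/-- The store of `k` locks: `true` = full (■), `false` = empty (□). -/
abbrev Store (k : ℕ) := Fin k → Bool

/-- LOCKSIMPLE step: `P_i` fills an empty lock `i` (blocks if full);
    `T_i` empties lock `i` and never blocks. -/
def LockStep {k : ℕ} : (LProc k × Store k) → (LProc k × Store k) → Prop :=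
  fun s t => ∃ (i : Fin k) (u : List (LSym k)) (b : Bool) (R : LProc k),
    ((s.1 = ((LOp.put, i) :: u, b) ::ₘ R ∧ s.2 i = false ∧
      t.1 = (u, b) ::ₘ R ∧ t.2 = Function.update s.2 i true) ∨
     (s.1 = ((LOp.take, i) :: u, b) ::ₘ R ∧
      t.1 = (u, b) ::ₘ R ∧ t.2 = Function.update s.2 i false))

def LSuccessful {k : ℕ} (s : LProc k × Store k) : Prop := (([], true) : LSub k) ∈ s.1

def LMayConv {k : ℕ} (s : LProc k × Store k) : Prop :=
  ∃ t, Relation.ReflTransGen LockStep s t ∧ LSuccessful t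

def LMustConv {k : ℕ} (s : LProc k × Store k) : Prop :=
  ∀ t, Relation.ReflTransGen LockStep s t → LMayConv t

/-- The compositional translation determined by the strings `tb = τ(!)` and `tq = τ(?)`,
    applied to a subprocess. -/
def transSub {k : ℕ} (tb tq : List (LSym k)) (u : SSub) : LSub k :=
  (u.1.flatMap (fun c => match c with | SSym.bang => tb | SSym.ques => tq), u.2)

/-- The compositional translation applied to a process. -/
def transProc {k : ℕ} (tb tq : List (LSym k)) (P : SProc) : LProc k :=
  P.map (transSub tb tq)

/-- Correctness of the compositional translation `(tb, tq)` with initial store `IS`: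
    may- and must-convergence are preserved and reflected. -/
def Correct {k : ℕ} (IS : Store k) (tb tq : List (LSym k)) : Prop :=
  ∀ P : SProc,
    (SMayConv P ↔ LMayConv (transProc tb tq P, IS)) ∧
    (SMustConv P ↔ LMustConv (transProc tb tq P, IS))

/-- The solo execution of the string `s` from store `IS` reaches the point where
    `(put, i) :: rest` remains and deadlocks there since lock `i` is full. -/
def SoloBlocked {k : ℕ} (IS : Store k) (s : List (LSym k)) (i : Fin k)
    (rest : List (LSym k)) : Prop :=
  ∃ C : Store k,
    Relation.ReflTransGen LockStep (({(s, false)} : LProc k), IS)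
      (({((LOp.put, i) :: rest, false)} : LProc k), C) ∧
    C i = true

/-- Blocking type `P_i`: the blocking prefix is `R P_i` with `R` free of `P_i, T_i`. -/
def BlockingTypeP {k : ℕ} (IS : Store k) (s : List (LSym k)) (i : Fin k) : Prop :=
  ∃ r rest, s = r ++ (LOp.put, i) :: rest ∧ (∀ x ∈ r, x.2 ≠ i) ∧
    SoloBlocked IS s i rest

/-- Blocking type `P_i P_i`: the blocking prefix is `R₁ P_i R₂ P_i` with
    `R₂` free of `P_i, T_i`, deadlocking exactly before the last `P_i`. -/
def BlockingTypePP {k : ℕ} (IS : Store k) (s : List (LSym k)) (i : Fin k) : Prop :=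
  ∃ r1 r2 rest, s = r1 ++ (LOp.put, i) :: r2 ++ (LOp.put, i) :: rest ∧
    (∀ x ∈ r2, x.2 ≠ i) ∧ SoloBlocked IS s i rest

/-- `s` has `T_i` as its first symbol mentioning lock `i`. -/
def FirstISymIsTake {k : ℕ} (s : List (LSym k)) (i : Fin k) : Prop :=
  ∃ r rest, s = r ++ (LOp.take, i) :: rest ∧ ∀ x ∈ r, x.2 ≠ i

/-- A singleton multiset equals a cons only trivially. -/
lemma aux_cons_eq_singleton {α : Type*} {a b : α} {R : Multiset α}
    (h : a ::ₘ R = {b}) : a = b ∧ R = 0 := by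
  have hc := congrArg Multiset.card h
  simp [Multiset.card_cons] at hc
  subst hc
  constructor
  · have : a ∈ ({b} : Multiset α) := h ▸ Multiset.mem_cons_self a 0
    simpa using this
  · rfl

/-- Any state reachable from a solo (singleton) process is the singleton process
with some prefix consumed; if the consumed prefix avoids lock `i`, the store at `i`
is unchanged. -/
lemma aux_solo_reach {k : ℕ} (IS : Store k) (s : List (LSym k)) (i : Fin k)
    {t : LProc k × Store k}
    (h : Relation.ReflTransGen LockStep (({(s, false)} : LProc k), IS) t) :
    ∃ n, t.1 = {(s.drop n, false)} ∧
      ((∀ x ∈ s.take n, x.2 ≠ i) → t.2 i = IS i) := by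
  induction h with
  | refl => exact ⟨0, by simp, fun _ => rfl⟩
  | @tail b c h step ih =>
    obtain ⟨n, hQ, hC⟩ := ih
    obtain ⟨j, u, bb, R, hstep⟩ := step
    have key : ∀ (op : LOp), b.1 = ((op, j) :: u, bb) ::ₘ R →
        c.1 = (u, bb) ::ₘ R → c.2 = Function.update b.2 j (op = LOp.put) →
        ∃ n', c.1 = {(s.drop n', false)} ∧
          ((∀ x ∈ s.take n', x.2 ≠ i) → c.2 i = IS i) := by
      intro op hb1 hc1 hc2
      rw [hQ] at hb1
      obtain ⟨hpair, hR⟩ := aux_cons_eq_singleton hb1.symm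
      have hdrop : s.drop n = (op, j) :: u := (congrArg Prod.fst hpair).symm
      have hbb : bb = false := congrArg Prod.snd hpair
      have hu : s.drop (n + 1) = u := by
        rw [← List.drop_drop, hdrop]; rfl
      refine ⟨n + 1, by rw [hc1, hR, hbb, hu]; rfl, ?_⟩
      intro hfree
      have htake : s.take (n + 1) = s.take n ++ [(op, j)] := by
        rw [List.take_add, hdrop]; rfl
      have hji : j ≠ i := by
        have := hfree (op, j) (by rw [htake]; simp)
        simpa using this
      have : c.2 i = b.2 i := by rw [hc2]; exact Function.update_of_ne hji.symm _ _
      rw [this]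
      exact hC (fun x hx => hfree x (by rw [htake]; exact List.mem_append_left _ hx))
    rcases hstep with ⟨hb1, _, hc1, hc2⟩ | ⟨hb1, hc1, hc2⟩
    · exact key LOp.put hb1 hc1 (by simpa using hc2)
    · exact key LOp.take hb1 hc1 (by simpa using hc2)

/-- If lock `i` is full and the solo string starts with an `i`-free prefix `r`
followed by `P_i`, execution can never get past `r`, and lock `i` stays full. -/
lemma aux_solo_blocked {k : ℕ} (IS : Store k) (r rest : List (LSym k)) (i : Fin k)
    (hfree : ∀ x ∈ r, x.2 ≠ i) (hIS : IS i = true)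
    {t : LProc k × Store k}
    (h : Relation.ReflTransGen LockStep
      (({(r ++ (LOp.put, i) :: rest, false)} : LProc k), IS) t) :
    ∃ n ≤ r.length, t.1 = {((r ++ (LOp.put, i) :: rest).drop n, false)} ∧
      t.2 i = true := by
  set s := r ++ (LOp.put, i) :: rest with hs
  induction h with
  | refl => exact ⟨0, Nat.zero_le _, by simp, hIS⟩
  | @tail b c h step ih =>
    obtain ⟨n, hn, hQ, hCi⟩ := ih
    obtain ⟨j, u, bb, R, hstep⟩ := step
    have key : ∀ (op : LOp), b.1 = ((op, j) :: u, bb) ::ₘ R →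
        (op = LOp.put → b.2 j = false) →
        c.1 = (u, bb) ::ₘ R → c.2 = Function.update b.2 j (op = LOp.put) →
        ∃ n' ≤ r.length, c.1 = {(s.drop n', false)} ∧ c.2 i = true := by
      intro op hb1 hput hc1 hc2
      rw [hQ] at hb1
      obtain ⟨hpair, hR⟩ := aux_cons_eq_singleton hb1.symm
      have hdrop : s.drop n = (op, j) :: u := (congrArg Prod.fst hpair).symm
      have hbb : bb = false := congrArg Prod.snd hpair
      have hu : s.drop (n + 1) = u := by
        rw [← List.drop_drop, hdrop]; rfl
      -- show n < r.length and j ≠ i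
      have hji : j ≠ i := by
        rcases Nat.lt_or_ge n r.length with hlt | hge
        · -- head symbol comes from r
          have hd : s.drop n = r.drop n ++ (LOp.put, i) :: rest := by
            rw [hs]; exact List.drop_append_of_le_length (Nat.le_of_lt hlt)
          have hne : r.drop n ≠ [] := by
            intro hnil
            have := congrArg List.length hnil
            simp at this
            omega
          obtain ⟨y, ys, hys⟩ := List.exists_cons_of_ne_nil hne
          have hy : y = (op, j) := by
            rw [hd, hys] at hdrop
            exact (List.cons.inj hdrop).1
          have : y ∈ r := List.mem_of_mem_drop (hys ▸ (List.mem_cons_self : y ∈ y :: ys))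
          have := hfree y this
          rw [hy] at this
          simpa using this
        · -- n = r.length : head symbol is (put, i), impossible
          exfalso
          have hn' : n = r.length := Nat.le_antisymm hn hge
          have hd : s.drop n = (LOp.put, i) :: rest := by
            rw [hs, hn']; exact List.drop_left
          rw [hd] at hdrop
          have hop : op = LOp.put := (congrArg Prod.fst (List.cons.inj hdrop).1).symm
          have hj : j = i := (congrArg Prod.snd (List.cons.inj hdrop).1).symm
          have := hput hop
          rw [hj, hCi] at this
          simp at this
      have hlt : n < r.length := by
        rcases Nat.lt_or_ge n r.length with hlt | hge
        · exact hlt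
        · exfalso
          have hn' : n = r.length := Nat.le_antisymm hn hge
          have hd : s.drop n = (LOp.put, i) :: rest := by
            rw [hs, hn']; exact List.drop_left
          rw [hd] at hdrop
          have hj : j = i := (congrArg Prod.snd (List.cons.inj hdrop).1).symm
          exact hji hj
      refine ⟨n + 1, hlt, by rw [hc1, hR, hbb, hu]; rfl, ?_⟩
      have : c.2 i = b.2 i := by rw [hc2]; exact Function.update_of_ne hji.symm _ _
      rw [this]; exact hCi
    rcases hstep with ⟨hb1, hbf, hc1, hc2⟩ | ⟨hb1, hc1, hc2⟩
    · exact key LOp.put hb1 (fun _ => hbf) hc1 (by simpa using hc2)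
    · exact key LOp.take hb1 (fun hop => by cases hop) hc1 (by simpa using hc2)

/-- First occurrence decomposition: if `(put, i) ∈ s`, then either the first
`i`-symbol of `s` is a take, or `s` splits at a first `i`-symbol which is a put. -/
lemma aux_first_sym {k : ℕ} (i : Fin k) :
    ∀ s : List (LSym k), (LOp.put, i) ∈ s →
      FirstISymIsTake s i ∨
        ∃ r rest, s = r ++ (LOp.put, i) :: rest ∧ ∀ x ∈ r, x.2 ≠ i := by
  intro s
  induction s with
  | nil => simp
  | cons a t ih =>
    intro hmem
    by_cases hai : a.2 = i
    · obtain ⟨op, j⟩ := a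
      simp only at hai
      subst hai
      cases op with
      | put => exact Or.inr ⟨[], t, by simp, by simp⟩
      | take => exact Or.inl ⟨[], t, by simp, by simp⟩
    · have hmt : (LOp.put, i) ∈ t := by
        rcases List.mem_cons.mp hmem with h | h
        · exact absurd (congrArg Prod.snd h.symm) hai
        · exact h
      rcases ih hmt with ⟨r, rest, hr, hf⟩ | ⟨r, rest, hr, hf⟩
      · refine Or.inl ⟨a :: r, rest, by rw [hr]; rfl, ?_⟩
        intro x hx
        rcases List.mem_cons.mp hx with rfl | hx
        · exact hai
        · exact hf x hx
      · refine Or.inr ⟨a :: r, rest, by rw [hr]; rfl, ?_⟩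
        intro x hx
        rcases List.mem_cons.mp hx with rfl | hx
        · exact hai
        · exact hf x hx

/-- Blocking type `P_i` forces `IS i = true`. -/
lemma aux_partP {k : ℕ} (IS : Store k) (s : List (LSym k)) (i : Fin k)
    (h : BlockingTypeP IS s i) : IS i = true := by
  obtain ⟨r, rest, hs, hfree, C, hreach, hCi⟩ := h
  obtain ⟨n, hQ, hC⟩ := aux_solo_reach IS s i hreach
  obtain ⟨hpair, -⟩ := aux_cons_eq_singleton hQ.symm
  have hdrop : s.drop n = (LOp.put, i) :: rest := congrArg Prod.fst hpair
  have hlen : s.length - n = rest.length + 1 := by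
    have := congrArg List.length hdrop
    simpa using this
  have hslen : s.length = r.length + (rest.length + 1) := by
    rw [hs]; simp
  have hnr : n = r.length := by omega
  have htake : s.take n = r := by
    rw [hs, hnr]; exact List.take_left
  have := hC (htake ▸ hfree)
  rw [← this]
  exact hCi

/-- Blocking type `P_i P_i` forces the first `i`-symbol to be a take, or `IS i = false`. -/
lemma aux_partPP {k : ℕ} (IS : Store k) (s : List (LSym k)) (i : Fin k)
    (h : BlockingTypePP IS s i) : FirstISymIsTake s i ∨ IS i = false := by
  rcases Bool.eq_false_or_eq_true (IS i) with hIS | hIS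
  swap
  · exact Or.inr hIS
  left
  obtain ⟨r1, r2, rest, hs, hfree2, C, hreach, hCi⟩ := h
  have hmem : (LOp.put, i) ∈ s := by rw [hs]; simp
  rcases aux_first_sym i s hmem with h | ⟨r, rest', hr, hfree⟩
  · exact h
  exfalso
  -- r.length ≤ r1.length
  have hle : r.length ≤ r1.length := by
    by_contra hlt
    push_neg at hlt
    have h1 : r.drop r1.length ++ (LOp.put, i) :: rest'
        = (LOp.put, i) :: (r2 ++ (LOp.put, i) :: rest) := by
      rw [← List.drop_append_of_le_length (Nat.le_of_lt hlt), ← hr, hs]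
      simp
    have hne : r.drop r1.length ≠ [] := by
      intro hnil
      have := congrArg List.length hnil
      simp at this
      omega
    obtain ⟨y, ys, hys⟩ := List.exists_cons_of_ne_nil hne
    have hy : y = (LOp.put, i) := by
      rw [hys] at h1
      exact (List.cons.inj h1).1
    have hyr : y ∈ r := List.mem_of_mem_drop (hys ▸ (List.mem_cons_self : y ∈ y :: ys))
    have := hfree y hyr
    rw [hy] at this
    simp at this
  obtain ⟨n, hn, hQ, -⟩ := aux_solo_blocked IS r rest' i hfree hIS (hr ▸ hreach)
  obtain ⟨hpair, -⟩ := aux_cons_eq_singleton hQ.symm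
  have hdrop : (r ++ (LOp.put, i) :: rest').drop n = (LOp.put, i) :: rest :=
    congrArg Prod.fst hpair
  have hlen := congrArg List.length hdrop
  simp only [List.length_drop, List.length_append, List.length_cons] at hlen
  have hslen : r.length + (rest'.length + 1) = s.length := by
    rw [hr]; simp
  have hslen2 : s.length = r1.length + (1 + (r2.length + (rest.length + 1))) := by
    rw [hs]; simp; omega
  omega

/-- for a correct translation with `k ≥ 2` locks: blocking type `P_i`
of `τ(!)` forces `IS_i = ■`; blocking type `P_iP_i` of `τ(!)` forces that the first
symbol of `τ(!)` mentioning lock `i` is `T_i`, or `IS_i = □`. Same for `τ(?)`. -/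
theorem blocking_type_vs_store :
    ∀ (k : ℕ), 2 ≤ k → ∀ (IS : Store k) (tb tq : List (LSym k)) (i : Fin k),
      Correct IS tb tq →
      (BlockingTypeP IS tb i → IS i = true) ∧
      (BlockingTypePP IS tb i → (FirstISymIsTake tb i ∨ IS i = false)) ∧
      (BlockingTypeP IS tq i → IS i = true) ∧
      (BlockingTypePP IS tq i → (FirstISymIsTake tq i ∨ IS i = false)) := by
  intro k _ IS tb tq i _
  exact ⟨aux_partP IS tb i, aux_partPP IS tb i, aux_partP IS tq i, aux_partPP IS tq i⟩
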